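/- arXiv:1911.03239 — 5 statements merged into one kernel-verified Lean document; each statement's English description precedes it below -/
import Mathlib

section
/- For all t ≥ 1, y > 1, and y' ∈ [1/2, 1], there exists a universal constant C > 0 such that exp(-(y-y')²/(4t)) - exp(-(y+y')²/(4t)) ≤ C·(y·y'/t)·exp(-y²/(5t)). -/
open Real Set

theorem stmt0 :
    ∃ C : ℝ, 0 < C ∧ ∀ t : ℝ, 1 ≤ t → ∀ y : ℝ, 1 < y → ∀ y' ∈ Icc (1/2 : ℝ) 1,
      exp (-(y - y')^2 / (4*t)) - exp (-(y + y')^2 / (4*t))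
        ≤ C * (y * y' / t) * exp (-y^2 / (5*t)) := by
  refine ⟨Real.exp 1, Real.exp_pos 1, ?_⟩
  intro t ht y hy y' hy'
  obtain ⟨hy1, hy2⟩ := hy'
  have ht0 : (0:ℝ) < t := lt_of_lt_of_le one_pos ht
  have hA : exp (-(y + y')^2 / (4*t))
      = exp (-(y - y')^2 / (4*t)) * exp (-(y*y'/t)) := by
    rw [← Real.exp_add]
    congr 1
    field_simp
    ring
  have hx : (0:ℝ) ≤ y*y'/t := by positivity
  have h1 : exp (-(y - y')^2 / (4*t)) - exp (-(y + y')^2 / (4*t))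
      ≤ exp (-(y - y')^2 / (4*t)) * (y*y'/t) := by
    rw [hA]
    have h := Real.add_one_le_exp (-(y*y'/t))
    nlinarith [Real.exp_pos (-(y - y')^2 / (4*t))]
  have h2 : exp (-(y - y')^2 / (4*t)) ≤ exp 1 * exp (-y^2/(5*t)) := by
    rw [← Real.exp_add, Real.exp_le_exp]
    have hq : 4*y^2 - 5*(y-y')^2 ≤ 20*t := by
      nlinarith [sq_nonneg (y-5), mul_nonneg (by linarith : (0:ℝ) ≤ 1-y')
        (by linarith : (0:ℝ) ≤ 2*y - y' - 1)]
    have hkey : (1 + -y^2/(5*t)) - (-(y - y')^2/(4*t))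
        = (20*t - (4*y^2 - 5*(y-y')^2))/(20*t) := by
      field_simp
      ring
    have : (0:ℝ) ≤ (20*t - (4*y^2 - 5*(y-y')^2))/(20*t) :=
      div_nonneg (by linarith) (by positivity)
    linarith
  calc exp (-(y - y')^2 / (4*t)) - exp (-(y + y')^2 / (4*t))
      ≤ exp (-(y - y')^2 / (4*t)) * (y*y'/t) := h1
    _ ≤ (exp 1 * exp (-y^2/(5*t))) * (y*y'/t) := mul_le_mul_of_nonneg_right h2 hx
    _ = exp 1 * (y * y' / t) * exp (-y^2 / (5*t)) := by ring
end

section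
/- Let v(t,y) = ε·e^t·∫_{1/2}^{1} (exp(-(y-y')²/(4t)) - exp(-(y+y')²/(4t)))/√(4πt) dy' for t ≥ 1, y > 1, ε > 0. Then there is a universal constant C > 0 such that v(t,y) ≤ C·ε·(e^t/t)·(y/√t)·exp(-y²/(5t)) for all t ≥ 2 and y > 1. -/
open Real Set intervalIntegral

theorem stmt2 :
    ∃ C : ℝ, 0 < C ∧ ∀ ε : ℝ, 0 < ε → ∀ t : ℝ, 2 ≤ t → ∀ y : ℝ, 1 < y →
      ε * exp t * ∫ y' in (1/2 : ℝ)..1,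
          (exp (-(y - y')^2 / (4*t)) - exp (-(y + y')^2 / (4*t))) / Real.sqrt (4*π*t)
        ≤ C * ε * (exp t / t) * (y / Real.sqrt t) * exp (-y^2 / (5*t)) := by
  refine ⟨1, one_pos, fun ε hε t ht y hy => ?_⟩
  have ht0 : (0:ℝ) < t := by linarith
  have hst : (0:ℝ) < Real.sqrt t := Real.sqrt_pos.mpr ht0
  have hpi : (0:ℝ) < π := Real.pi_pos
  have hs4t : (0:ℝ) < Real.sqrt (4*π*t) := Real.sqrt_pos.mpr (by positivity)
  set E : ℝ := Real.exp (-y^2/(5*t)) with hE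
  have hEpos : 0 < E := Real.exp_pos _
  set M : ℝ := y / t * (Real.exp (1/2) * E) / Real.sqrt (4*π*t) with hM
  have hpt : ∀ y' ∈ Set.Icc (1/2:ℝ) 1,
      (exp (-(y - y')^2 / (4*t)) - exp (-(y + y')^2 / (4*t))) / Real.sqrt (4*π*t) ≤ M := by
    intro y' hy'
    obtain ⟨hy1, hy2⟩ := hy'
    rw [hM]
    gcongr ?_ / _
    -- numerator bound
    have hrw : -(y+y')^2/(4*t) = -(y-y')^2/(4*t) + (-(y*y'/t)) := by
      field_simp; ring
    have h1 : exp (-(y - y')^2 / (4*t)) - exp (-(y + y')^2 / (4*t))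
        ≤ exp (-(y - y')^2 / (4*t)) * (y*y'/t) := by
      rw [hrw, Real.exp_add]
      nlinarith [Real.add_one_le_exp (-(y*y'/t)), (Real.exp_pos (-(y-y')^2/(4*t))).le,
        Real.exp_pos (-(y*y'/t))]
    have hq : (y - 1)^2 ≤ (y - y')^2 := by nlinarith
    have h2 : exp (-(y - y')^2 / (4*t)) ≤ Real.exp (1/2) * E := by
      rw [hE, ← Real.exp_add]
      apply Real.exp_le_exp.mpr
      have e1 : -(y-y')^2/(4*t) + y^2/(5*t) = (4*y^2 - 5*(y-y')^2)/(20*t) := by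
        field_simp; ring
      have e2 : (4*y^2 - 5*(y-y')^2)/(20*t) ≤ 20/(20*t) := by
        gcongr
        nlinarith [sq_nonneg (y-5), hq]
      have e3 : (20:ℝ)/(20*t) = 1/t := by field_simp
      have e4 : (1:ℝ)/t ≤ 1/2 := one_div_le_one_div_of_le two_pos ht
      have e0 : -y^2/(5*t) = -(y^2/(5*t)) := by ring
      linarith
    have hyy : y*y'/t ≤ y/t := by
      apply div_le_div_of_nonneg_right ?_ ht0.le
      nlinarith
    calc exp (-(y - y')^2 / (4*t)) - exp (-(y + y')^2 / (4*t))
        ≤ exp (-(y - y')^2 / (4*t)) * (y*y'/t) := h1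
      _ ≤ (Real.exp (1/2) * E) * (y/t) := by
          apply mul_le_mul h2 hyy (by positivity) (by positivity)
      _ = y / t * (Real.exp (1/2) * E) := by ring
  have hcont : Continuous fun y' : ℝ =>
      (exp (-(y - y')^2 / (4*t)) - exp (-(y + y')^2 / (4*t))) / Real.sqrt (4*π*t) := by
    fun_prop
  have hIle : (∫ y' in (1/2:ℝ)..1,
      (exp (-(y - y')^2 / (4*t)) - exp (-(y + y')^2 / (4*t))) / Real.sqrt (4*π*t))
      ≤ (1 - 1/2) * M := by
    have h := intervalIntegral.integral_mono_on (by norm_num : (1/2:ℝ) ≤ 1)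
      (μ := MeasureTheory.volume) (hcont.intervalIntegrable _ _) intervalIntegrable_const hpt
    rwa [intervalIntegral.integral_const, smul_eq_mul] at h
  have hs4 : Real.sqrt (4*π*t) = Real.sqrt (4*π) * Real.sqrt t := by
    rw [show (4*π*t) = (4*π)*t by ring, Real.sqrt_mul (by positivity)]
  have h3s : (3:ℝ) ≤ Real.sqrt (4*π) := by
    nlinarith [Real.sq_sqrt (show (0:ℝ) ≤ 4*π by positivity), Real.sqrt_nonneg (4*π),
      Real.pi_gt_three]
  have hexp : Real.exp (1/2) ≤ 3 := by
    have h1 := Real.exp_one_lt_d9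
    have h2 : Real.exp (1/2) ≤ Real.exp 1 := Real.exp_le_exp.mpr (by norm_num)
    linarith
  have hfin : (1 - 1/2 : ℝ) * M ≤ 1/t * (y/Real.sqrt t) * E := by
    rw [hM, hs4]
    have hs4pos : (0:ℝ) < Real.sqrt (4*π) := by linarith
    have h1 : (1 - 1/2 : ℝ) * (y / t * (Real.exp (1/2) * E) / (Real.sqrt (4*π) * Real.sqrt t))
        = Real.exp (1/2) / (2 * Real.sqrt (4*π)) * (1/t * (y/Real.sqrt t) * E) := by
      field_simp
      ring
    rw [h1]
    have h2 : Real.exp (1/2) / (2 * Real.sqrt (4*π)) ≤ 1 := by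
      rw [div_le_one (by positivity)]
      linarith
    calc Real.exp (1/2) / (2 * Real.sqrt (4*π)) * (1/t * (y/Real.sqrt t) * E)
        ≤ 1 * (1/t * (y/Real.sqrt t) * E) := by
          apply mul_le_mul_of_nonneg_right h2 (by positivity)
      _ = 1/t * (y/Real.sqrt t) * E := one_mul _
  calc ε * exp t * ∫ y' in (1/2 : ℝ)..1,
          (exp (-(y - y')^2 / (4*t)) - exp (-(y + y')^2 / (4*t))) / Real.sqrt (4*π*t)
      ≤ ε * exp t * ((1 - 1/2) * M) := by
        apply mul_le_mul_of_nonneg_left hIle (by positivity)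
    _ ≤ ε * exp t * (1/t * (y/Real.sqrt t) * E) := by
        apply mul_le_mul_of_nonneg_left hfin (by positivity)
    _ = 1 * ε * (exp t / t) * (y / Real.sqrt t) * E := by ring
end

section
/- Suppose T_ε is a function of ε ∈ (0, ε₀) such that there exist constants C₁, C₂ > 0 with C₁/ε ≤ e^{T_ε}/T_ε^{3/2} and, for every δ > 0, e^{T_ε}/T_ε^{3/2+δ} ≤ Q_δ/ε for some Q_δ > 0. Then T_ε = ln(1/ε) + (3/2)·ln ln(1/ε) + o(ln ln(1/ε)) as ε → 0⁺. -/
open Real Set Filter Asymptotics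

private lemma rpow32_nonpos {x : ℝ} (hx : x ≤ 0) : x ^ ((3:ℝ)/2) = 0 := by
  rcases hx.lt_or_eq with h | h
  · rw [Real.rpow_def_of_neg h]
    have hc : Real.cos ((3:ℝ)/2 * π) = 0 := by
      rw [Real.cos_eq_zero_iff]
      exact ⟨1, by push_cast; ring⟩
    rw [hc, mul_zero]
  · rw [h]; exact Real.zero_rpow (by norm_num)

private lemma aux_log_le {a ε t p : ℝ} (hε : 0 < ε) (ha : 0 < a) (ht : 0 < t)
    (h : a / ε ≤ Real.exp t / t ^ p) :
    Real.log a + Real.log (1/ε) ≤ t - p * Real.log t := by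
  have h1 : Real.log (a/ε) ≤ Real.log (Real.exp t / t ^ p) :=
    Real.log_le_log (div_pos ha hε) h
  rw [Real.log_div (ne_of_gt ha) (ne_of_gt hε),
    Real.log_div (Real.exp_ne_zero t) (ne_of_gt (Real.rpow_pos_of_pos ht p)),
    Real.log_exp, Real.log_rpow ht] at h1
  rw [Real.log_div one_ne_zero (ne_of_gt hε), Real.log_one]
  linarith

private lemma aux_log_ge {a ε t p : ℝ} (hε : 0 < ε) (ha : 0 < a) (ht : 0 < t)
    (h : Real.exp t / t ^ p ≤ a / ε) :
    t - p * Real.log t ≤ Real.log a + Real.log (1/ε) := by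
  have h1 : Real.log (Real.exp t / t ^ p) ≤ Real.log (a/ε) :=
    Real.log_le_log (div_pos (Real.exp_pos t) (Real.rpow_pos_of_pos ht p)) h
  rw [Real.log_div (ne_of_gt ha) (ne_of_gt hε),
    Real.log_div (Real.exp_ne_zero t) (ne_of_gt (Real.rpow_pos_of_pos ht p)),
    Real.log_exp, Real.log_rpow ht] at h1
  rw [Real.log_div one_ne_zero (ne_of_gt hε), Real.log_one]
  linarith

private lemma log_le_two_sqrt {t : ℝ} (ht : 0 < t) : Real.log t ≤ 2 * Real.sqrt t := by
  have h1 : Real.log (Real.sqrt t) ≤ Real.sqrt t - 1 :=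
    Real.log_le_sub_one_of_pos (Real.sqrt_pos.mpr ht)
  rw [Real.log_sqrt ht.le] at h1
  nlinarith [Real.sqrt_nonneg t]

set_option maxHeartbeats 1000000 in
theorem stmt10 (T : ℝ → ℝ) (ε₀ : ℝ) (hε₀ : 0 < ε₀) (C₁ : ℝ) (hC₁ : 0 < C₁)
    (hlow : ∀ ε ∈ Ioo (0:ℝ) ε₀, C₁ / ε ≤ exp (T ε) / (T ε) ^ ((3:ℝ)/2))
    (hup : ∀ δ : ℝ, 0 < δ → ∃ Q : ℝ, 0 < Q ∧
      ∀ ε ∈ Ioo (0:ℝ) ε₀, exp (T ε) / (T ε) ^ ((3:ℝ)/2 + δ) ≤ Q / ε) :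
    (fun ε : ℝ => T ε - (Real.log (1/ε) + (3/2) * Real.log (Real.log (1/ε))))
      =o[nhdsWithin 0 (Ioi 0)] (fun ε : ℝ => Real.log (Real.log (1/ε))) := by
  have hTpos : ∀ ε ∈ Ioo (0:ℝ) ε₀, 0 < T ε := by
    intro ε hε
    by_contra h
    push_neg at h
    have h0 := hlow ε hε
    rw [rpow32_nonpos h, div_zero] at h0
    have : 0 < C₁ / ε := div_pos hC₁ hε.1
    linarith
  rw [isLittleO_iff]
  intro c hc
  set δ := c/2 with hδdef
  have hδ : 0 < δ := half_pos hc
  obtain ⟨Q₁, hQ₁, hup1⟩ := hup 1 one_pos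
  obtain ⟨Q, hQ, hupδ⟩ := hup δ hδ
  set c1 := Real.log C₁ with hc1
  set q := Real.log Q with hq
  set q1 := Real.log Q₁ with hq1
  set K₀ := (3/2)*q1 - (5/2)*c1 with hK₀
  set K := |c1| + (3/2)*Real.log 2 + |q| + (3/2+δ)*Real.log 3 with hK
  have hlog2 : 0 < Real.log 2 := Real.log_pos (by norm_num)
  have hlog3 : 0 < Real.log 3 := Real.log_pos (by norm_num)
  have hp3 : 0 < (3/2+δ) * Real.log 3 := mul_pos (by linarith) hlog3
  have hKpos : 0 < K := by
    have h1 := abs_nonneg c1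
    have h2 := abs_nonneg q
    rw [hK]
    linarith
  have hL : Tendsto (fun ε : ℝ => Real.log (1/ε)) (nhdsWithin 0 (Ioi 0)) atTop := by
    have h1 : Tendsto (fun ε : ℝ => 1/ε) (nhdsWithin (0:ℝ) (Ioi 0)) atTop := by
      simpa [one_div] using (tendsto_inv_nhdsGT_zero (𝕜 := ℝ))
    exact Real.tendsto_log_atTop.comp h1
  have hll : Tendsto (fun ε : ℝ => Real.log (Real.log (1/ε))) (nhdsWithin 0 (Ioi 0)) atTop :=
    Real.tendsto_log_atTop.comp hL
  have hmem : ∀ᶠ ε in nhdsWithin (0:ℝ) (Ioi 0), ε ∈ Ioo (0:ℝ) ε₀ := by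
    have h1 : ∀ᶠ ε in nhdsWithin (0:ℝ) (Ioi 0), ε ∈ Ioi (0:ℝ) := eventually_mem_nhdsWithin
    have h2 : ∀ᶠ ε in nhdsWithin (0:ℝ) (Ioi 0), ε < ε₀ :=
      (gt_mem_nhds hε₀).filter_mono nhdsWithin_le_nhds
    filter_upwards [h1, h2] with ε hε1 hε2
    exact ⟨hε1, hε2⟩
  filter_upwards [hmem, hL.eventually_ge_atTop (2*|K₀|+2),
    hL.eventually_ge_atTop (4*(3+2*δ)^2), hL.eventually_ge_atTop (2*|q|),
    hll.eventually_ge_atTop (K/δ)] with ε hε hA hB hC hD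
  set t := T ε with ht
  set L := Real.log (1/ε) with hLdef
  set lL := Real.log L with hlLdef
  set lgt := Real.log t with hltdef
  have htpos : 0 < t := hTpos ε hε
  have hI1 : c1 + L ≤ t - (3/2) * lgt := aux_log_le hε.1 hC₁ htpos (hlow ε hε)
  have hI2 : t - ((3:ℝ)/2 + δ) * lgt ≤ q + L := aux_log_ge hε.1 hQ htpos (hupδ ε hε)
  have hI21 : t - ((3:ℝ)/2 + 1) * lgt ≤ q1 + L := aux_log_ge hε.1 hQ₁ htpos (hup1 ε hε)
  have hs : lgt ≤ 2 * Real.sqrt t := log_le_two_sqrt htpos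
  clear_value δ c1 q q1 K₀ K
  -- lower bound on t
  have hT1 : L - K₀ ≤ t := by rw [hK₀]; linarith
  have hT2 : L/2 + 1 ≤ t := by
    have := le_abs_self K₀
    linarith
  have hLpos : 0 < L := by
    have := abs_nonneg K₀
    linarith
  have ht1 : 1 ≤ t := by linarith
  have hltnn : 0 ≤ lgt := Real.log_nonneg ht1
  -- upper bound on t
  have htup : t ≤ 3*L := by
    rcases le_or_gt t (4*(3+2*δ)^2) with h | h
    · linarith
    · have hsq : Real.sqrt t ^ 2 = t := Real.sq_sqrt htpos.le
      have hsn : 0 ≤ Real.sqrt t := Real.sqrt_nonneg t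
      have hsl : 2*(3+2*δ) < Real.sqrt t := by nlinarith
      have e1 : (0:ℝ) ≤ (3/2+δ) * (2*Real.sqrt t - lgt) :=
        mul_nonneg (by linarith) (by linarith)
      have e2 : (0:ℝ) ≤ Real.sqrt t * (Real.sqrt t - 2*(3+2*δ)) :=
        mul_nonneg hsn (by linarith)
      have hkey : ((3:ℝ)/2 + δ) * lgt ≤ t/2 := by nlinarith
      have := le_abs_self q
      linarith
  have hlt_up : lgt ≤ Real.log 3 + lL := by
    have h0 : Real.log t ≤ Real.log (3*L) := Real.log_le_log htpos htup
    rw [Real.log_mul (by norm_num) (ne_of_gt hLpos), ← hlLdef, ← hltdef] at h0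
    exact h0
  have hlt_low : lL - Real.log 2 ≤ lgt := by
    have h0 : (0:ℝ) < L/2 := by linarith
    have h1 : Real.log (L/2) ≤ Real.log t := Real.log_le_log h0 (by linarith)
    rw [Real.log_div (ne_of_gt hLpos) (by norm_num), ← hlLdef, ← hltdef] at h1
    exact h1
  have hllpos : 0 < lL := lt_of_lt_of_le (div_pos hKpos hδ) hD
  have hKle : K ≤ lL * δ := (div_le_iff₀ hδ).mp hD
  have hδlL : 0 < δ * lL := mul_pos hδ hllpos
  have hclL : c * lL = 2 * (δ * lL) := by rw [hδdef]; ring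
  rw [Real.norm_eq_abs, Real.norm_eq_abs, abs_of_pos hllpos, abs_le]
  constructor
  · -- lower bound
    have h1 := neg_abs_le c1
    have h2 := abs_nonneg q
    rw [hK] at hKle
    linarith
  · -- upper bound
    have h1 := le_abs_self q
    have h2 : ((3:ℝ)/2 + δ) * lgt ≤ ((3:ℝ)/2 + δ) * (Real.log 3 + lL) :=
      mul_le_mul_of_nonneg_left hlt_up (by linarith)
    have h3 := abs_nonneg c1
    rw [hK] at hKle
    linarith
end

section
/- Let κ ∈ (0,1), and for 1 ≤ s ≤ κt define E(t-s,s,y') = |1+y'|³·exp(-(1+y')²/(4(t-s)))·exp(-y'²/(3s)) / ((1+(t-s))·(t-s)^{1/2}·s·(1+s²)). Then there is a constant C (depending only on κ) such that ∫_1^{κt} ∫_0^∞ e^{t+s}·E(t-s,s,y') dy' ds ≤ C·t·e^{(1+κ)t}/t^{3/2} for all t ≥ 2. -/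
open Real Set MeasureTheory intervalIntegral

lemma sq_le_four_exp (x : ℝ) (hx : 0 ≤ x) : x^2 ≤ 4 * exp x := by
  have h := add_one_le_exp (x/2)
  have h2 : exp x = exp (x/2) * exp (x/2) := by rw [← exp_add]; ring_nf
  nlinarith [exp_pos (x/2)]

lemma key_pointwise (s y : ℝ) (hs : 1 ≤ s) (hy : 0 ≤ y) :
    (1+y)^3 * exp (-y^2/(3*s)) ≤ 5000 * s^2 * exp (-(1/(4*s)) * y^2) := by
  have hs0 : (0:ℝ) < s := lt_of_lt_of_le one_pos hs
  have hx : (0:ℝ) ≤ y^2/(12*s) := by positivity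
  have h4 : (y^2/(12*s))^2 ≤ 4 * exp (y^2/(12*s)) := sq_le_four_exp _ hx
  have hE : (1:ℝ) ≤ exp (y^2/(12*s)) := one_le_exp hx
  have hsplit : exp (-y^2/(3*s)) = exp (-(1/(4*s))*y^2) * exp (-(y^2/(12*s))) := by
    rw [← exp_add]; congr 1; field_simp; ring
  have hy4 : y^4 ≤ 576 * s^2 * exp (y^2/(12*s)) := by
    have h5 : (y^2/(12*s))^2 = y^4 / (144*s^2) := by ring
    rw [h5] at h4
    rw [div_le_iff₀ (by positivity)] at h4
    nlinarith [exp_pos (y^2/(12*s)), sq_nonneg s]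
  have hcube : (1+y)^3 ≤ 16 + 8*y^4 := by
    nlinarith [sq_nonneg (y-1), sq_nonneg (y^2-1), sq_nonneg (y^2-y), sq_nonneg y]
  have hmain : (1+y)^3 ≤ 5000 * s^2 * exp (y^2/(12*s)) := by
    nlinarith [hy4, hE, hcube, sq_nonneg s, mul_le_mul hs hs (by norm_num : (0:ℝ) ≤ 1) hs0.le]
  calc (1+y)^3 * exp (-y^2/(3*s))
      = ((1+y)^3 * exp (-(y^2/(12*s)))) * exp (-(1/(4*s))*y^2) := by rw [hsplit]; ring
    _ ≤ (5000 * s^2) * exp (-(1/(4*s))*y^2) := by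
        apply mul_le_mul_of_nonneg_right _ (exp_nonneg _)
        rw [exp_neg, ← div_eq_mul_inv, div_le_iff₀ (exp_pos _)]
        exact hmain
    _ = 5000 * s^2 * exp (-(1/(4*s)) * y^2) := by ring

set_option maxHeartbeats 800000 in
theorem stmt14 (κ : ℝ) (hκ : κ ∈ Ioo (0:ℝ) 1) :
    ∃ C : ℝ, 0 < C ∧ ∀ t : ℝ, 2 ≤ t →
      (∫ s in (1:ℝ)..(κ*t), ∫ y' in Ioi (0:ℝ),
          exp (t + s) * (|1 + y'|^3 * exp (-(1 + y')^2 / (4*(t - s)))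
            * exp (-y'^2 / (3*s))
            / ((1 + (t - s)) * (t - s) ^ ((1:ℝ)/2) * s * (1 + s^2))))
        ≤ C * t * exp ((1 + κ) * t) / t ^ ((3:ℝ)/2) := by
  obtain ⟨hκ0, hκ1⟩ := hκ
  have hc : (0:ℝ) < (1-κ) ^ ((3:ℝ)/2) := rpow_pos_of_pos (by linarith) _
  refine ⟨10000 / (1-κ) ^ ((3:ℝ)/2), by positivity, fun t ht => ?_⟩
  have ht0 : (0:ℝ) < t := by linarith
  have htr : (0:ℝ) < t ^ ((3:ℝ)/2) := rpow_pos_of_pos ht0 _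
  set M : ℝ := 10000 * exp ((1+κ)*t) / ((1-κ) ^ ((3:ℝ)/2) * t ^ ((3:ℝ)/2)) with hMdef
  have hM0 : 0 ≤ M := by positivity
  have hRHS : 0 ≤ 10000 / (1-κ) ^ ((3:ℝ)/2) * t * exp ((1 + κ) * t) / t ^ ((3:ℝ)/2) :=
    div_nonneg (mul_nonneg (mul_nonneg (div_nonneg (by norm_num) hc.le) ht0.le)
      (exp_nonneg _)) htr.le
  -- nonnegativity of the inner integral
  have hFnn : ∀ s : ℝ, 0 < s → s < t → 0 ≤ ∫ y' in Ioi (0:ℝ),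
      exp (t + s) * (|1 + y'|^3 * exp (-(1 + y')^2 / (4*(t - s))) * exp (-y'^2 / (3*s)) /
        ((1 + (t - s)) * (t - s) ^ ((1:ℝ)/2) * s * (1 + s^2))) := by
    intro s hs0 hst
    have hts : (0:ℝ) < t - s := by linarith
    have hr : (0:ℝ) < (t - s) ^ ((1:ℝ)/2) := rpow_pos_of_pos hts _
    have hD : (0:ℝ) < (1 + (t - s)) * (t - s) ^ ((1:ℝ)/2) * s * (1 + s^2) := by positivity
    apply setIntegral_nonneg measurableSet_Ioi
    intro y hy
    exact mul_nonneg (exp_nonneg _) (div_nonneg (by positivity) hD.le)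
  -- main bound for the inner integral
  have hFle : ∀ s ∈ Icc (1:ℝ) (κ*t), (∫ y' in Ioi (0:ℝ),
      exp (t + s) * (|1 + y'|^3 * exp (-(1 + y')^2 / (4*(t - s))) * exp (-y'^2 / (3*s)) /
        ((1 + (t - s)) * (t - s) ^ ((1:ℝ)/2) * s * (1 + s^2)))) ≤ M := by
    rintro s ⟨hs1, hsκ⟩
    have hs0 : (0:ℝ) < s := by linarith
    have hκt : (1-κ)*t ≤ t - s := by nlinarith
    have hts : (0:ℝ) < t - s := by nlinarith
    have hr : (0:ℝ) < (t - s) ^ ((1:ℝ)/2) := rpow_pos_of_pos hts _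
    have hD : (0:ℝ) < (1 + (t - s)) * (t - s) ^ ((1:ℝ)/2) * s * (1 + s^2) := by positivity
    set A : ℝ := 5000 * exp ((1+κ)*t) * s^2 /
        ((1 + (t - s)) * (t - s) ^ ((1:ℝ)/2) * s * (1 + s^2)) with hAdef
    have hA0 : 0 ≤ A := div_nonneg (by positivity) hD.le
    have hint : IntegrableOn (fun y => A * exp (-(1/(4*s)) * y^2)) (Ioi (0:ℝ)) :=
      ((integrable_exp_neg_mul_sq (by positivity : (0:ℝ) < 1/(4*s))).const_mul A).integrableOn
    have hle : ∀ y ∈ Ioi (0:ℝ),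
        exp (t + s) * (|1 + y|^3 * exp (-(1 + y)^2 / (4*(t - s))) * exp (-y^2 / (3*s)) /
          ((1 + (t - s)) * (t - s) ^ ((1:ℝ)/2) * s * (1 + s^2)))
        ≤ A * exp (-(1/(4*s)) * y^2) := by
      intro y hy
      have hy0 : (0:ℝ) ≤ y := le_of_lt hy
      have h1 : exp (-(1 + y)^2 / (4*(t - s))) ≤ 1 := by
        rw [exp_le_one_iff]
        apply div_nonpos_of_nonpos_of_nonneg (neg_nonpos.2 (by positivity)) (by positivity)
      have h2 := key_pointwise s y hs1 hy0
      have h3 : exp (t + s) ≤ exp ((1+κ)*t) := by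
        apply exp_le_exp.2; nlinarith
      rw [abs_of_nonneg (by linarith : (0:ℝ) ≤ 1 + y)]
      have hnum : exp (t + s) * ((1+y)^3 * exp (-(1 + y)^2 / (4*(t - s))) * exp (-y^2/(3*s)))
          ≤ exp ((1+κ)*t) * (5000 * s^2 * exp (-(1/(4*s)) * y^2)) := by
        have e1 : (1+y)^3 * exp (-(1 + y)^2 / (4*(t-s))) * exp (-y^2/(3*s))
            ≤ (1+y)^3 * exp (-y^2/(3*s)) := by
          calc (1+y)^3 * exp (-(1 + y)^2 / (4*(t-s))) * exp (-y^2/(3*s))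
              = ((1+y)^3 * exp (-y^2/(3*s))) * exp (-(1 + y)^2 / (4*(t-s))) := by ring
            _ ≤ ((1+y)^3 * exp (-y^2/(3*s))) * 1 :=
              mul_le_mul_of_nonneg_left h1 (by positivity)
            _ = (1+y)^3 * exp (-y^2/(3*s)) := mul_one _
        calc exp (t + s) * ((1+y)^3 * exp (-(1 + y)^2 / (4*(t - s))) * exp (-y^2/(3*s)))
            ≤ exp ((1+κ)*t) * ((1+y)^3 * exp (-y^2/(3*s))) :=
              mul_le_mul h3 e1 (by positivity) (exp_nonneg _)
          _ ≤ exp ((1+κ)*t) * (5000 * s^2 * exp (-(1/(4*s)) * y^2)) :=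
              mul_le_mul_of_nonneg_left h2 (exp_nonneg _)
      calc exp (t + s) * ((1+y)^3 * exp (-(1 + y)^2 / (4*(t - s))) * exp (-y^2 / (3*s)) /
            ((1 + (t - s)) * (t - s) ^ ((1:ℝ)/2) * s * (1 + s^2)))
          = exp (t + s) * ((1+y)^3 * exp (-(1 + y)^2 / (4*(t - s))) * exp (-y^2/(3*s))) /
            ((1 + (t - s)) * (t - s) ^ ((1:ℝ)/2) * s * (1 + s^2)) := by ring
        _ ≤ exp ((1+κ)*t) * (5000 * s^2 * exp (-(1/(4*s)) * y^2)) /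
            ((1 + (t - s)) * (t - s) ^ ((1:ℝ)/2) * s * (1 + s^2)) := by gcongr
        _ = A * exp (-(1/(4*s)) * y^2) := by rw [hAdef]; ring
    have hmono : (∫ y' in Ioi (0:ℝ),
        exp (t + s) * (|1 + y'|^3 * exp (-(1 + y')^2 / (4*(t - s))) * exp (-y'^2 / (3*s)) /
          ((1 + (t - s)) * (t - s) ^ ((1:ℝ)/2) * s * (1 + s^2))))
        ≤ ∫ y in Ioi (0:ℝ), A * exp (-(1/(4*s)) * y^2) := by
      apply integral_mono_of_nonneg
      · exact ae_restrict_of_forall_mem measurableSet_Ioi (fun y hy =>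
          mul_nonneg (exp_nonneg _) (div_nonneg (by positivity) hD.le))
      · exact hint
      · exact ae_restrict_of_forall_mem measurableSet_Ioi hle
    have hcalc : (∫ y in Ioi (0:ℝ), A * exp (-(1/(4*s)) * y^2))
        = A * (√(π / (1/(4*s))) / 2) := by
      rw [MeasureTheory.integral_const_mul, integral_gaussian_Ioi]
    have hsqrt : √(π / (1/(4*s))) / 2 ≤ 2*s := by
      have h1 : π / (1/(4*s)) = 4*π*s := by field_simp
      rw [h1]
      have h2 : (4*π*s) ≤ (4*s)^2 := by nlinarith [pi_le_four, pi_pos]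
      have h3 : √(4*π*s) ≤ 4*s := by
        calc √(4*π*s) ≤ √((4*s)^2) := Real.sqrt_le_sqrt h2
          _ = 4*s := Real.sqrt_sq (by positivity)
      linarith
    have hDge : (1-κ)^((3:ℝ)/2) * t^((3:ℝ)/2) * s^3
        ≤ (1 + (t-s)) * (t-s)^((1:ℝ)/2) * s * (1+s^2) := by
      have h1κpos : (0:ℝ) < (1-κ)*t := mul_pos (by linarith) ht0
      have hrw : (1-κ)^((3:ℝ)/2) * t^((3:ℝ)/2) = ((1-κ)*t) * ((1-κ)*t)^((1:ℝ)/2) := by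
        rw [← mul_rpow (by linarith : (0:ℝ) ≤ 1-κ) ht0.le,
          show ((3:ℝ)/2) = 1 + 1/2 by norm_num,
          rpow_add h1κpos, rpow_one]
      rw [hrw]
      calc ((1-κ)*t) * ((1-κ)*t)^((1:ℝ)/2) * s^3
          = (((1-κ)*t) * ((1-κ)*t)^((1:ℝ)/2)) * s * s^2 := by ring
        _ ≤ ((1 + (t-s)) * (t-s)^((1:ℝ)/2)) * s * (1+s^2) := by
            have e1 : (1-κ)*t ≤ 1 + (t-s) := by linarith
            have e2 : ((1-κ)*t)^((1:ℝ)/2) ≤ (t-s)^((1:ℝ)/2) :=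
              rpow_le_rpow h1κpos.le hκt (by norm_num)
            have e12 : ((1-κ)*t) * ((1-κ)*t)^((1:ℝ)/2) ≤ (1 + (t-s)) * (t-s)^((1:ℝ)/2) :=
              mul_le_mul e1 e2 (rpow_nonneg h1κpos.le _) (by linarith)
            have e3 : s^2 ≤ 1 + s^2 := by linarith
            have h12nn : (0:ℝ) ≤ (1 + (t-s)) * (t-s)^((1:ℝ)/2) :=
              le_trans (le_of_lt (mul_pos h1κpos (rpow_pos_of_pos h1κpos _))) e12
            exact mul_le_mul (mul_le_mul e12 le_rfl hs0.le h12nn) e3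
              (by positivity) (mul_nonneg h12nn hs0.le)
        _ = (1 + (t-s)) * (t-s)^((1:ℝ)/2) * s * (1+s^2) := by ring
    have hfinal : A * (2*s) ≤ M := by
      have heq : A * (2*s) = 10000 * exp ((1+κ)*t) * s^3 /
          ((1 + (t - s)) * (t - s) ^ ((1:ℝ)/2) * s * (1 + s^2)) := by
        rw [hAdef]; ring
      have hden : (0:ℝ) < (1-κ)^((3:ℝ)/2) * t^((3:ℝ)/2) * s^3 :=
        mul_pos (mul_pos hc htr) (pow_pos hs0 3)
      have heq2 : M = 10000 * exp ((1+κ)*t) * s^3 /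
          ((1-κ)^((3:ℝ)/2) * t^((3:ℝ)/2) * s^3) := by
        rw [hMdef, div_eq_div_iff (mul_pos hc htr).ne' hden.ne']
        ring
      rw [heq, heq2]
      apply div_le_div_of_nonneg_left (by positivity) hden hDge
    calc (∫ y' in Ioi (0:ℝ),
        exp (t + s) * (|1 + y'|^3 * exp (-(1 + y')^2 / (4*(t - s))) * exp (-y'^2 / (3*s)) /
          ((1 + (t - s)) * (t - s) ^ ((1:ℝ)/2) * s * (1 + s^2))))
        ≤ A * (√(π / (1/(4*s))) / 2) := by rw [← hcalc]; exact hmono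
      _ ≤ A * (2*s) := mul_le_mul_of_nonneg_left hsqrt hA0
      _ ≤ M := hfinal
  rcases le_or_gt 1 (κ*t) with h1κ | h1κ
  · by_cases hInt : IntervalIntegrable (fun s => ∫ y' in Ioi (0:ℝ),
        exp (t + s) * (|1 + y'|^3 * exp (-(1 + y')^2 / (4*(t - s))) * exp (-y'^2 / (3*s)) /
          ((1 + (t - s)) * (t - s) ^ ((1:ℝ)/2) * s * (1 + s^2)))) volume 1 (κ*t)
    · have hmono := intervalIntegral.integral_mono_on h1κ hInt
        (intervalIntegrable_const : IntervalIntegrable (fun _ => M) volume 1 (κ*t)) hFle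
      rw [intervalIntegral.integral_const, smul_eq_mul] at hmono
      have h2 : (κ*t - 1) * M ≤ t * M := by
        apply mul_le_mul_of_nonneg_right _ hM0
        nlinarith
      have h3 : t * M = 10000 / (1-κ) ^ ((3:ℝ)/2) * t * exp ((1 + κ) * t) / t ^ ((3:ℝ)/2) := by
        rw [hMdef]; ring
      linarith
    · rw [intervalIntegral.integral_undef hInt]
      exact hRHS
  · rw [intervalIntegral.integral_symm (κ*t) 1]
    have hpos : 0 ≤ ∫ s in (κ*t)..1, ∫ y' in Ioi (0:ℝ),
        exp (t + s) * (|1 + y'|^3 * exp (-(1 + y')^2 / (4*(t - s))) * exp (-y'^2 / (3*s)) /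
          ((1 + (t - s)) * (t - s) ^ ((1:ℝ)/2) * s * (1 + s^2))) := by
      apply intervalIntegral.integral_nonneg h1κ.le
      intro s hs
      have hsl : κ*t ≤ s := hs.1
      have hsu : s ≤ 1 := hs.2
      exact hFnn s (lt_of_lt_of_le (by positivity) hsl) (by linarith)
    linarith
end

section
/- For t ≥ 2 and κ ∈ (0,1), ∫_{κt}^{t} ∫_0^∞ e^{t+s} · |1+y'|³·exp(-(1+y')²/(4(t-s)))·exp(-y'²/(3s)) / ((1+(t-s))·(t-s)^{1/2}·s·(1+s²)) dy' ds ≤ C·e^{2t}/t^{3/2}, with C depending only on κ. -/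
open Real Set MeasureTheory intervalIntegral

lemma aux_deriv (b : ℝ) (hb : 0 < b) (y : ℝ) :
    HasDerivAt (fun y : ℝ => -((1+y)^2/(2*b) + 1/(2*b^2)) * Real.exp (-b*(1+y)^2))
      ((1+y)^3 * Real.exp (-b*(1+y)^2)) y := by
  have h1 : HasDerivAt (fun y : ℝ => 1+y) 1 y := by
    simpa using (hasDerivAt_id y).const_add 1
  have h2 : HasDerivAt (fun y : ℝ => (1+y)^2) (2*(1+y)) y := by
    have := h1.fun_pow 2
    simpa [mul_comm] using this
  have h3 : HasDerivAt (fun y : ℝ => -b*(1+y)^2) (-b*(2*(1+y))) y := h2.const_mul (-b)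
  have h4 := h3.exp
  have h5 : HasDerivAt (fun y : ℝ => -((1+y)^2/(2*b) + 1/(2*b^2))) (-(2*(1+y)/(2*b))) y :=
    ((h2.div_const (2*b)).add_const _).neg
  have h6 := h5.fun_mul h4
  refine h6.congr_deriv ?_
  have hb' : b ≠ 0 := hb.ne'
  field_simp
  ring

lemma aux_tendsto (b : ℝ) (hb : 0 < b) :
    Filter.Tendsto (fun y : ℝ => -((1+y)^2/(2*b) + 1/(2*b^2)) * Real.exp (-b*(1+y)^2))
      Filter.atTop (nhds 0) := by
  have hcomp : Filter.Tendsto (fun y : ℝ => b*(1+y)^2) Filter.atTop Filter.atTop := by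
    apply Filter.Tendsto.const_mul_atTop hb
    exact (Filter.tendsto_pow_atTop (two_ne_zero)).comp (Filter.tendsto_atTop_add_const_left _ 1 Filter.tendsto_id)
  have hX : Filter.Tendsto (fun y : ℝ => (b*(1+y)^2) * Real.exp (-(b*(1+y)^2)))
      Filter.atTop (nhds 0) := by
    have := (Real.tendsto_pow_mul_exp_neg_atTop_nhds_zero 1).comp hcomp
    simpa [Function.comp_def] using this
  have hE : Filter.Tendsto (fun y : ℝ => Real.exp (-(b*(1+y)^2))) Filter.atTop (nhds 0) :=
    Real.tendsto_exp_neg_atTop_nhds_zero.comp hcomp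
  have h := ((hX.const_mul (1/(2*b^2))).add (hE.const_mul (1/(2*b^2)))).neg
  have heq : (fun y : ℝ => -((1/(2*b^2)) * ((b*(1+y)^2) * Real.exp (-(b*(1+y)^2)))
      + (1/(2*b^2)) * Real.exp (-(b*(1+y)^2))))
      = (fun y : ℝ => -((1+y)^2/(2*b) + 1/(2*b^2)) * Real.exp (-b*(1+y)^2)) := by
    funext y
    rw [show -b*(1+y)^2 = -(b*(1+y)^2) by ring]
    have hb' : b ≠ 0 := hb.ne'
    field_simp
  rw [heq] at h
  simpa using h

lemma aux_int (b : ℝ) (hb : 0 < b) :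
    IntegrableOn (fun y : ℝ => (1+y)^3 * Real.exp (-b*(1+y)^2)) (Ioi 0) ∧
    ∫ y in Ioi (0:ℝ), (1+y)^3 * Real.exp (-b*(1+y)^2)
      = (1/(2*b) + 1/(2*b^2)) * Real.exp (-b) := by
  have hderiv : ∀ x ∈ Ici (0:ℝ),
      HasDerivAt (fun y : ℝ => -((1+y)^2/(2*b) + 1/(2*b^2)) * Real.exp (-b*(1+y)^2))
        ((1+x)^3 * Real.exp (-b*(1+x)^2)) x := fun x _ => aux_deriv b hb x
  have hpos : ∀ x ∈ Ioi (0:ℝ), 0 ≤ (1+x)^3 * Real.exp (-b*(1+x)^2) := by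
    intro x hx
    have : (0:ℝ) ≤ 1 + x := by have := hx.out; linarith
    positivity
  have htd := aux_tendsto b hb
  constructor
  · exact integrableOn_Ioi_deriv_of_nonneg' hderiv hpos htd
  · have := integral_Ioi_of_hasDerivAt_of_nonneg' hderiv hpos htd
    rw [this]
    norm_num
    ring

set_option maxHeartbeats 1000000 in
theorem stmt15 (κ : ℝ) (hκ : κ ∈ Ioo (0:ℝ) 1) :
    ∃ C : ℝ, 0 < C ∧ ∀ t : ℝ, 2 ≤ t →
      (∫ s in (κ*t)..t, ∫ y' in Ioi (0:ℝ),
          exp (t + s) * (|1 + y'|^3 * exp (-(1 + y')^2 / (4*(t - s)))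
            * exp (-y'^2 / (3*s))
            / ((1 + (t - s)) * (t - s) ^ ((1:ℝ)/2) * s * (1 + s^2))))
        ≤ C * exp (2*t) / t ^ ((3:ℝ)/2) := by
  obtain ⟨hκ0, hκ1⟩ := hκ
  refine ⟨10/κ^3, by positivity, fun t ht => ?_⟩
  have ht0 : (0:ℝ) < t := by linarith
  have hκt : 0 < κ*t := by positivity
  have hκtt : κ*t ≤ t := by nlinarith
  set M : ℝ := 10 * Real.exp (2*t) * t^((1:ℝ)/2) / (κ^3 * t^3) with hM
  have hM0 : 0 ≤ M := by positivity
  set F : ℝ → ℝ := fun s => ∫ y' in Ioi (0:ℝ),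
      exp (t + s) * (|1 + y'|^3 * exp (-(1 + y')^2 / (4*(t - s)))
        * exp (-y'^2 / (3*s))
        / ((1 + (t - s)) * (t - s) ^ ((1:ℝ)/2) * s * (1 + s^2))) with hF
  have key : ∀ s ∈ Icc (κ*t) t, F s ≤ M := by
    intro s hs
    have hs0 : 0 < s := lt_of_lt_of_le hκt hs.1
    rcases eq_or_lt_of_le hs.2 with hst | hst
    · -- s = t : integrand vanishes (division by zero)
      have hz : F s = 0 := by
        rw [hF]
        simp only [hst, sub_self, Real.zero_rpow (by norm_num : (1:ℝ)/2 ≠ 0)]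
        simp
      rw [hz]; exact hM0
    · -- s < t
      have hτ : 0 < t - s := by linarith
      set b : ℝ := 1/(4*(t-s)) with hbdef
      have hb : 0 < b := by rw [hbdef]; positivity
      obtain ⟨hgint, hgval⟩ := aux_int b hb
      set A : ℝ := (t-s)^((1:ℝ)/2) with hAdef
      have hA0 : 0 < A := Real.rpow_pos_of_pos hτ _
      have hA2 : A * A = t - s := by
        rw [hAdef, ← Real.rpow_add hτ]; norm_num
      have hAle : A ≤ t^((1:ℝ)/2) := by
        apply Real.rpow_le_rpow hτ.le (by linarith) (by norm_num)
      set D' : ℝ := (1+(t-s)) * A * (κ*t) * (κ*t)^2 with hD'def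
      have hD' : 0 < D' := by rw [hD'def]; positivity
      set c : ℝ := Real.exp (2*t) / D' with hcdef
      have hc0 : 0 < c := by rw [hcdef]; positivity
      -- pointwise bound
      have hpt : ∀ y' ∈ Ioi (0:ℝ),
          exp (t + s) * (|1 + y'|^3 * exp (-(1 + y')^2 / (4*(t - s)))
            * exp (-y'^2 / (3*s))
            / ((1 + (t - s)) * (t - s) ^ ((1:ℝ)/2) * s * (1 + s^2)))
          ≤ c * ((1+y')^3 * Real.exp (-b*(1+y')^2)) := by
        intro y' hy'
        have hy0 : (0:ℝ) < y' := hy'.out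
        have h1y : (0:ℝ) < 1 + y' := by linarith
        have harg : -(1 + y')^2 / (4*(t - s)) = -b*(1+y')^2 := by
          rw [hbdef]; ring
        rw [abs_of_pos h1y, harg]
        have hE2 : Real.exp (-y'^2 / (3*s)) ≤ 1 := by
          apply Real.exp_le_one_iff.2
          apply div_nonpos_of_nonpos_of_nonneg (neg_nonpos.2 (by positivity)) (by positivity)
        have hN : (1+y')^3 * Real.exp (-b*(1+y')^2) * Real.exp (-y'^2 / (3*s))
            ≤ (1+y')^3 * Real.exp (-b*(1+y')^2) :=
          mul_le_of_le_one_right (by positivity) hE2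
        have hDD : D' ≤ (1 + (t - s)) * (t - s) ^ ((1:ℝ)/2) * s * (1 + s^2) := by
          rw [hD'def, ← hAdef]
          have h2 : κ*t ≤ s := hs.1
          have h3 : (κ*t)^2 ≤ 1 + s^2 := by nlinarith
          have hpos1 : (0:ℝ) ≤ (1+(t-s)) * A := by positivity
          calc (1+(t-s)) * A * (κ*t) * (κ*t)^2
              ≤ (1+(t-s)) * A * s * (κ*t)^2 := by
                apply mul_le_mul_of_nonneg_right _ (by positivity)
                exact mul_le_mul_of_nonneg_left h2 hpos1
            _ ≤ (1+(t-s)) * A * s * (1 + s^2) := by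
                apply mul_le_mul_of_nonneg_left h3 (by positivity)
        calc exp (t + s) * ((1 + y')^3 * Real.exp (-b*(1+y')^2) * exp (-y'^2 / (3*s))
              / ((1 + (t - s)) * (t - s) ^ ((1:ℝ)/2) * s * (1 + s^2)))
            ≤ exp (2*t) * ((1+y')^3 * Real.exp (-b*(1+y')^2) / D') := by
              apply mul_le_mul (Real.exp_le_exp.2 (by linarith)) _ _ (Real.exp_pos _).le
              · exact div_le_div₀ (by positivity) hN hD' hDD
              · apply div_nonneg _ _
                · positivity
                · calc (0:ℝ) ≤ D' := hD'.le
                    _ ≤ _ := hDD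
          _ = c * ((1+y')^3 * Real.exp (-b*(1+y')^2)) := by rw [hcdef]; ring
      -- integrate the bound
      have hFs : F s ≤ ∫ y' in Ioi (0:ℝ), c * ((1+y')^3 * Real.exp (-b*(1+y')^2)) := by
        rw [hF]
        apply integral_mono_of_nonneg
        · apply (ae_restrict_iff' measurableSet_Ioi).2
          apply Filter.Eventually.of_forall
          intro y' hy'
          have hDpos : 0 < (1 + (t - s)) * (t - s) ^ ((1:ℝ)/2) * s * (1 + s^2) := by
            rw [← hAdef]; positivity
          have : (0:ℝ) ≤ |1 + y'|^3 * exp (-(1 + y')^2 / (4*(t - s))) * exp (-y'^2 / (3*s)) := by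
            positivity
          positivity
        · exact (hgint.const_mul c)
        · apply (ae_restrict_iff' measurableSet_Ioi).2
          exact Filter.Eventually.of_forall hpt
      rw [MeasureTheory.integral_const_mul, hgval] at hFs
      -- arithmetic: c * V ≤ M
      have hval2 : (1/(2*b) + 1/(2*b^2)) = 2*(t-s) + 8*(t-s)^2 := by
        rw [hbdef]
        field_simp
        ring
      have hexpb : Real.exp (-b) ≤ 1 := Real.exp_le_one_iff.2 (by linarith)
      have hVle : (1/(2*b) + 1/(2*b^2)) * Real.exp (-b) ≤ 2*(t-s) + 8*(t-s)^2 := by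
        rw [hval2]
        apply mul_le_of_le_one_right (by positivity) hexpb
      have hstep : c * ((1/(2*b) + 1/(2*b^2)) * Real.exp (-b))
          ≤ c * (2*(t-s) + 8*(t-s)^2) := mul_le_mul_of_nonneg_left hVle hc0.le
      have hscalar : 2*(t-s) + 8*(t-s)^2 ≤ 10 * t^((1:ℝ)/2) * ((1+(t-s)) * A) := by
        have h1 : A * ((1+(t-s)) * A) ≤ t^((1:ℝ)/2) * ((1+(t-s)) * A) :=
          mul_le_mul_of_nonneg_right hAle (by positivity)
        nlinarith [hA2, hτ, hA0]
      have hfinal : c * (2*(t-s) + 8*(t-s)^2) ≤ M := by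
        rw [hcdef, hM, hD'def, div_mul_eq_mul_div, div_le_div_iff₀ (by positivity) (by positivity)]
        have h := mul_le_mul_of_nonneg_left hscalar
          (show (0:ℝ) ≤ Real.exp (2*t) * (κ^3 * t^3) by positivity)
        nlinarith [h]
      linarith
  by_cases hint : IntervalIntegrable F volume (κ*t) t
  · have h1 : (∫ s in (κ*t)..t, F s) ≤ ∫ s in (κ*t)..t, M :=
      intervalIntegral.integral_mono_on hκtt hint (intervalIntegrable_const) key
    rw [intervalIntegral.integral_const, smul_eq_mul] at h1
    have h2 : (t - κ*t) * M ≤ t * M := by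
      apply mul_le_mul_of_nonneg_right (by nlinarith) hM0
    have h3 : t * M ≤ 10/κ^3 * exp (2*t) / t^((3:ℝ)/2) := by
      apply le_of_eq
      have hA : t^((1:ℝ)/2) * t^((3:ℝ)/2) = t^2 := by
        rw [← Real.rpow_add ht0, ← Real.rpow_natCast t 2]; norm_num
      have ht32 : (0:ℝ) < t^((3:ℝ)/2) := Real.rpow_pos_of_pos ht0 _
      have ht12 : (0:ℝ) < t^((1:ℝ)/2) := Real.rpow_pos_of_pos ht0 _
      rw [hM, ← mul_div_assoc, div_eq_div_iff (by positivity) ht32.ne']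
      field_simp
      linear_combination hA

    calc (∫ s in (κ*t)..t, F s) ≤ (t - κ*t) * M := h1
      _ ≤ t * M := h2
      _ ≤ 10/κ^3 * exp (2*t) / t^((3:ℝ)/2) := h3
  · rw [intervalIntegral.integral_undef hint]
    positivity
end
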